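/- For a subnormalized state ρ and an orthogonal projector Π on a finite-dimensional Hilbert space, P(ρ, ΠρΠ) ≤ √(2·tr(Π^⊥ρ) − (tr(Π^⊥ρ))²), where Π^⊥ = I − Π. -/

import Mathlib

open scoped ComplexOrder Kronecker
open Matrix Classical

noncomputable def msqrt {n : Type*} [Fintype n] [DecidableEq n] (A : Matrix n n ℂ) :
    Matrix n n ℂ :=
  if h : A.PosSemidef then
    (h.1.eigenvectorUnitary : Matrix n n ℂ) * diagonal ((↑) ∘ (Real.sqrt ·) ∘ h.1.eigenvalues) *
      (star h.1.eigenvectorUnitary : Matrix n n ℂ)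
  else 0


noncomputable def traceNorm {n : Type*} [Fintype n] [DecidableEq n] (A : Matrix n n ℂ) : ℝ :=
  (msqrt (Aᴴ * A)).trace.re

noncomputable def fid {n : Type*} [Fintype n] [DecidableEq n] (ρ σ : Matrix n n ℂ) : ℝ :=
  traceNorm (msqrt ρ * msqrt σ) + Real.sqrt ((1 - ρ.trace.re) * (1 - σ.trace.re))

noncomputable def pdist {n : Type*} [Fintype n] [DecidableEq n] (ρ σ : Matrix n n ℂ) : ℝ :=
  Real.sqrt (1 - (fid ρ σ) ^ 2)

/-- Loewner order: `A ≤ B` iff `B - A` is positive semidefinite. -/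
def loewnerLE {n : Type*} [Fintype n] (A B : Matrix n n ℂ) : Prop := (B - A).PosSemidef

/-- Max-relative entropy `D_max(ρ‖σ) = min {λ : ρ ≤ 2^λ σ}`. -/
noncomputable def Dmax {n : Type*} [Fintype n] (ρ σ : Matrix n n ℂ) : ℝ :=
  sInf {l : ℝ | loewnerLE ρ (((2 : ℝ) ^ l) • σ)}

def Subnormalized {n : Type*} [Fintype n] (ρ : Matrix n n ℂ) : Prop :=
  ρ.PosSemidef ∧ 0 < ρ.trace.re ∧ ρ.trace.re ≤ 1

def IsDensity {n : Type*} [Fintype n] (ρ : Matrix n n ℂ) : Prop :=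
  ρ.PosSemidef ∧ ρ.trace = 1

open scoped MatrixOrder in
lemma msqrt_of_psd {n : Type*} [Fintype n] [DecidableEq n] {A : Matrix n n ℂ}
    (hA : A.PosSemidef) : msqrt A = CFC.sqrt A := by
  rw [msqrt, dif_pos hA, CFC.sqrt_eq_real_sqrt A hA.nonneg, cfcₙ_eq_cfc, hA.1.cfc_eq]
  simp only [IsHermitian.cfc, Unitary.conjStarAlgAut_apply]
  rfl

open scoped MatrixOrder in
lemma msqrt_herm {n : Type*} [Fintype n] [DecidableEq n] {A : Matrix n n ℂ}
    (hA : A.PosSemidef) : (msqrt A)ᴴ = msqrt A := by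
  rw [msqrt_of_psd hA]; exact (CFC.sqrt_nonneg A).posSemidef.1

open scoped MatrixOrder in
lemma msqrt_mul_self' {n : Type*} [Fintype n] [DecidableEq n] {A : Matrix n n ℂ}
    (hA : A.PosSemidef) : msqrt A * msqrt A = A := by
  rw [msqrt_of_psd hA]; exact CFC.sqrt_mul_sqrt_self A hA.nonneg

open scoped MatrixOrder in
lemma msqrt_sq' {n : Type*} [Fintype n] [DecidableEq n] {A : Matrix n n ℂ}
    (hA : A.PosSemidef) : msqrt (A ^ 2) = A := by
  rw [msqrt_of_psd (hA.pow 2)]; exact CFC.sqrt_sq A hA.nonneg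

lemma psd_trace_re_nonneg {n : Type*} [Fintype n] {A : Matrix n n ℂ}
    (hA : A.PosSemidef) : 0 ≤ A.trace.re := by
  classical
  have h : ∀ i, 0 ≤ (A i i).re := by
    intro i
    have := hA.re_dotProduct_nonneg (Pi.single i 1)
    simpa [dotProduct, Matrix.mulVec, Pi.single_apply, Finset.sum_ite_eq] using this
  rw [Matrix.trace, Complex.re_sum]
  exact Finset.sum_nonneg fun i _ => h i

theorem stmt8 {n : Type*} [Fintype n] [DecidableEq n] (ρ P : Matrix n n ℂ)
    (hρ : Subnormalized ρ) (hP : Pᴴ = P) (hP2 : P * P = P) :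
    pdist ρ (P * ρ * P) ≤
      Real.sqrt (2 * (((1 - P) * ρ).trace.re) - (((1 - P) * ρ).trace.re) ^ 2) := by
  obtain ⟨hpsd, ht0, ht1⟩ := hρ
  set σ : Matrix n n ℂ := P * ρ * P with hσdef
  have hσ : σ.PosSemidef := by
    have := hpsd.mul_mul_conjTranspose_same P
    rwa [hP] at this
  set S : Matrix n n ℂ := msqrt σ with hSdef
  have hS_eq : S = msqrt σ := rfl
  have hSH : Sᴴ = S := by rw [hS_eq]; exact msqrt_herm hσ
  have hSS : S * S = σ := by rw [hS_eq]; exact msqrt_mul_self' hσ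
  have h1P : (1 - P) * P = 0 := by rw [sub_mul, one_mul, hP2, sub_self]
  have hPH : (1 - P)ᴴ = 1 - P := by rw [conjTranspose_sub, conjTranspose_one, hP]
  have hSP0 : S * (1 - P) = 0 := by
    have key : (S * (1 - P))ᴴ * (S * (1 - P)) = 0 := by
      calc (S * (1 - P))ᴴ * (S * (1 - P)) = (1 - P) * (S * S) * (1 - P) := by
            rw [conjTranspose_mul, hPH, hSH]; noncomm_ring
        _ = 0 := by
            rw [hSS, hσdef]
            calc (1 - P) * (P * ρ * P) * (1 - P) = ((1 - P) * P) * (ρ * P * (1 - P)) := by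
                  noncomm_ring
              _ = 0 := by rw [h1P, zero_mul]
    exact conjTranspose_mul_self_eq_zero.mp key
  have hSP : S * P = S := by
    have := hSP0
    rw [mul_sub, mul_one, sub_eq_zero] at this
    exact this.symm
  have hPS : P * S = S := by
    have := congrArg conjTranspose hSP
    rwa [conjTranspose_mul, hSH, hP] at this
  set R : Matrix n n ℂ := msqrt ρ with hRdef
  have hR_eq : R = msqrt ρ := rfl
  have hRH : Rᴴ = R := by rw [hR_eq]; exact msqrt_herm hpsd
  have hRR : R * R = ρ := by rw [hR_eq]; exact msqrt_mul_self' hpsd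
  have hM : (R * S)ᴴ * (R * S) = σ ^ 2 := by
    calc (R * S)ᴴ * (R * S) = S * ((R * R)) * S := by
          rw [conjTranspose_mul, hSH, hRH]; noncomm_ring
      _ = (S * P) * ρ * (P * S) := by rw [hSP, hPS, hRR]
      _ = S * (P * ρ * P) * S := by noncomm_ring
      _ = σ ^ 2 := by rw [← hσdef, ← hSS]; noncomm_ring
  have hmsq : msqrt ((R * S)ᴴ * (R * S)) = σ := by
    rw [hM, msqrt_sq' hσ]
  -- trace identities
  set t : ℝ := ρ.trace.re with htdef
  set e : ℝ := ((1 - P) * ρ).trace.re with hedef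
  have htrσ : σ.trace = (P * ρ).trace := by
    rw [hσdef, Matrix.trace_mul_cycle, hP2]
  have he : ((1 - P) * ρ).trace = ρ.trace - (P * ρ).trace := by
    rw [sub_mul, one_mul, trace_sub]
  have hσtr : σ.trace.re = t - e := by
    have h1 : σ.trace = ρ.trace - ((1 - P) * ρ).trace := by rw [htrσ, he]; ring
    rw [h1, Complex.sub_re, htdef, hedef]
  have h1mP : (1 - P) * (1 - P) = 1 - P := by
    rw [mul_sub, mul_one, h1P, sub_zero]
  have he0 : 0 ≤ e := by
    have hQ : ((1 - P) * ρ * (1 - P)).PosSemidef := by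
      have := hpsd.mul_mul_conjTranspose_same (1 - P)
      rwa [hPH] at this
    have htr : ((1 - P) * ρ * (1 - P)).trace = ((1 - P) * ρ).trace := by
      rw [Matrix.trace_mul_cycle, h1mP]
    have := psd_trace_re_nonneg hQ
    rwa [htr] at this
  have het : e ≤ t := by
    have := psd_trace_re_nonneg hσ
    rw [hσtr] at this
    linarith
  -- fidelity computation
  have hfid : fid ρ σ = (t - e) + Real.sqrt ((1 - t) * (1 - (t - e))) := by
    rw [fid, ← hRdef, ← hSdef, traceNorm, hmsq, hσtr, ← htdef]
  have h1t : (0:ℝ) ≤ 1 - t := by linarith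
  have hsq : 1 - t ≤ Real.sqrt ((1 - t) * (1 - (t - e))) := by
    have h2 : (1 - t) ^ 2 ≤ (1 - t) * (1 - (t - e)) := by nlinarith
    calc 1 - t = Real.sqrt ((1 - t) ^ 2) := (Real.sqrt_sq h1t).symm
      _ ≤ _ := Real.sqrt_le_sqrt h2
  have hfge : 1 - e ≤ fid ρ σ := by rw [hfid]; linarith
  have he1 : (0:ℝ) ≤ 1 - e := by linarith
  have hfpos : (0:ℝ) ≤ fid ρ σ := le_trans he1 hfge
  rw [pdist]
  apply Real.sqrt_le_sqrt
  nlinarith [mul_le_mul hfge hfge he1 hfpos]
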